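/- arXiv:2402.19386 — 4 statements merged into one kernel-verified Lean document; each statement's English description precedes it below -/
import Mathlib

section
/- Let κ > 1, c : ℝ → [κ⁻¹, κ] continuous, F(u) = ∫₀^u c(r) dr, and define 𝔲(R,S) := F⁻¹(∂ₓ⁻¹((R−S)/2)) for R, S ∈ L¹(𝕋). Then ‖𝔲(R₁,S₁) − 𝔲(R₂,S₂)‖_{L^∞(𝕋)} ≤ 2κ (‖R₁ − R₂‖_{L¹(𝕋)} + ‖S₁ − S₂‖_{L¹(𝕋)}). -/
open MeasureTheory Set

/-- The zero-average antiderivative operator `∂ₓ⁻¹` on the torus `[0,1]`. -/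
noncomputable def Dinv (g : ℝ → ℝ) (x : ℝ) : ℝ :=
  (∫ y in (0:ℝ)..x, g y) - x * (∫ y in (0:ℝ)..1, g y)
    - ∫ y in (0:ℝ)..1, ((∫ z in (0:ℝ)..y, g z) - y * ∫ z in (0:ℝ)..1, g z)

/-- The construction `𝔲(R,S) = F⁻¹(∂ₓ⁻¹((R−S)/2))`. -/
noncomputable def uCon (F R S : ℝ → ℝ) (x : ℝ) : ℝ :=
  Function.invFun F (Dinv (fun y => (R y - S y) / 2) x)

section Aux

variable {κ : ℝ} {c : ℝ → ℝ} {F : ℝ → ℝ}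

lemma aux_gap (hκ : 1 < κ) (hc : Continuous c) (hlb : ∀ r, κ⁻¹ ≤ c r)
    (hF : ∀ u, F u = ∫ r in (0:ℝ)..u, c r) {u v : ℝ} (huv : v ≤ u) :
    κ⁻¹ * (u - v) ≤ F u - F v := by
  have h1 : F u - F v = ∫ r in v..u, c r := by
    rw [hF, hF,
      intervalIntegral.integral_interval_sub_left (hc.intervalIntegrable _ _)
        (hc.intervalIntegrable _ _)]
  rw [h1]
  calc κ⁻¹ * (u - v) = ∫ _ in v..u, κ⁻¹ := by rw [intervalIntegral.integral_const, smul_eq_mul]; ring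
    _ ≤ ∫ r in v..u, c r := intervalIntegral.integral_mono_on huv intervalIntegrable_const
        (hc.intervalIntegrable _ _) (fun x _ => hlb x)

lemma aux_surj (hκ : 1 < κ) (hc : Continuous c) (hlb : ∀ r, κ⁻¹ ≤ c r)
    (hF : ∀ u, F u = ∫ r in (0:ℝ)..u, c r) : Function.Surjective F := by
  have hκ0 : (0:ℝ) < κ⁻¹ := inv_pos.mpr (lt_trans one_pos hκ)
  have hF0 : F 0 = 0 := by rw [hF]; simp
  have hcont : Continuous F := by
    have : Continuous fun u => ∫ r in (0:ℝ)..u, c r :=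
      intervalIntegral.continuous_primitive (fun a b => hc.intervalIntegrable a b) 0
    exact this.congr (fun u => (hF u).symm)
  apply hcont.surjective
  · apply Filter.tendsto_atTop_mono' Filter.atTop
      (f₁ := fun u => κ⁻¹ * u)
    · filter_upwards [Filter.eventually_ge_atTop (0:ℝ)] with u hu
      have := aux_gap hκ hc hlb hF hu
      rw [hF0] at this; linarith
    · exact Filter.Tendsto.const_mul_atTop hκ0 Filter.tendsto_id
  · apply Filter.tendsto_atBot_mono' Filter.atBot
      (f₁ := fun u => κ⁻¹ * u)
    · filter_upwards [Filter.eventually_le_atBot (0:ℝ)] with u hu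
      have := aux_gap hκ hc hlb hF hu
      rw [hF0] at this; linarith
    · exact Filter.Tendsto.const_mul_atBot hκ0 Filter.tendsto_id

lemma aux_lip (hκ : 1 < κ) (hc : Continuous c) (hlb : ∀ r, κ⁻¹ ≤ c r)
    (hF : ∀ u, F u = ∫ r in (0:ℝ)..u, c r) (a b : ℝ) :
    |Function.invFun F a - Function.invFun F b| ≤ κ * |a - b| := by
  have hκ0 : (0:ℝ) < κ := lt_trans one_pos hκ
  have hsurj := aux_surj hκ hc hlb hF
  set u := Function.invFun F a with hu
  set v := Function.invFun F b with hv
  have ha : F u = a := Function.invFun_eq (hsurj a)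
  have hb : F v = b := Function.invFun_eq (hsurj b)
  have key : ∀ p q : ℝ, q ≤ p → p - q ≤ κ * |F p - F q| := by
    intro p q hpq
    have h1 := aux_gap hκ hc hlb hF hpq
    have h2 : κ⁻¹ * (p - q) ≤ |F p - F q| := le_trans h1 (le_abs_self _)
    calc p - q = κ * (κ⁻¹ * (p - q)) := by field_simp
      _ ≤ κ * |F p - F q| := by nlinarith
  rcases le_total v u with h | h
  · have := key u v h
    rw [ha, hb] at this
    rw [abs_of_nonneg (by linarith)]
    exact this
  · have := key v u h
    rw [ha, hb, abs_sub_comm] at this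
    rw [abs_of_nonpos (by linarith)]
    linarith

lemma aux_dinv {g₁ g₂ : ℝ → ℝ} (h₁ : IntegrableOn g₁ (Icc (0:ℝ) 1))
    (h₂ : IntegrableOn g₂ (Icc (0:ℝ) 1)) {x : ℝ} (hx : x ∈ Icc (0:ℝ) 1) :
    |Dinv g₁ x - Dinv g₂ x| ≤ 4 * ∫ y in (0:ℝ)..1, |g₁ y - g₂ y| := by
  set d := fun y => g₁ y - g₂ y with hd
  have hdint : IntegrableOn d (Icc (0:ℝ) 1) := h₁.sub h₂
  have hII : ∀ a b : ℝ, a ∈ Icc (0:ℝ) 1 → b ∈ Icc (0:ℝ) 1 →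
      IntervalIntegrable d volume a b := by
    intro a b ha hb
    apply IntegrableOn.intervalIntegrable
    exact hdint.mono_set (uIcc_subset_Icc ha hb)
  have hI1 : ∀ a b : ℝ, a ∈ Icc (0:ℝ) 1 → b ∈ Icc (0:ℝ) 1 →
      IntervalIntegrable g₁ volume a b := fun a b ha hb =>
    IntegrableOn.intervalIntegrable (h₁.mono_set (uIcc_subset_Icc ha hb))
  have hI2 : ∀ a b : ℝ, a ∈ Icc (0:ℝ) 1 → b ∈ Icc (0:ℝ) 1 →
      IntervalIntegrable g₂ volume a b := fun a b ha hb =>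
    IntegrableOn.intervalIntegrable (h₂.mono_set (uIcc_subset_Icc ha hb))
  have h01 : (0:ℝ) ∈ Icc (0:ℝ) 1 := by norm_num
  have h11 : (1:ℝ) ∈ Icc (0:ℝ) 1 := by norm_num
  set I := ∫ y in (0:ℝ)..1, |d y| with hIdef
  have hdabs : IntervalIntegrable (fun y => |d y|) volume 0 1 := by
    have := (hII 0 1 h01 h11)
    exact this.abs
  have hInonneg : 0 ≤ I :=
    intervalIntegral.integral_nonneg zero_le_one (fun u _ => abs_nonneg _)
  -- bound on partial integrals of d
  have hbound : ∀ y ∈ Icc (0:ℝ) 1, |∫ z in (0:ℝ)..y, d z| ≤ I := by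
    intro y hy
    calc |∫ z in (0:ℝ)..y, d z| ≤ ∫ z in (0:ℝ)..y, |d z| :=
          intervalIntegral.abs_integral_le_integral_abs hy.1
      _ ≤ I := intervalIntegral.integral_mono_interval le_rfl hy.1 hy.2
          (ae_of_all _ (fun z => abs_nonneg _)) hdabs
  -- split the three pieces
  have hA : (∫ y in (0:ℝ)..x, g₁ y) - (∫ y in (0:ℝ)..x, g₂ y) = ∫ y in (0:ℝ)..x, d y :=
    (intervalIntegral.integral_sub (hI1 0 x h01 hx) (hI2 0 x h01 hx)).symm
  have hB : (∫ y in (0:ℝ)..1, g₁ y) - (∫ y in (0:ℝ)..1, g₂ y) = ∫ y in (0:ℝ)..1, d y :=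
    (intervalIntegral.integral_sub (hI1 0 1 h01 h11) (hI2 0 1 h01 h11)).symm
  -- inner functions
  set G₁ := fun y => (∫ z in (0:ℝ)..y, g₁ z) - y * ∫ z in (0:ℝ)..1, g₁ z with hG₁
  set G₂ := fun y => (∫ z in (0:ℝ)..y, g₂ z) - y * ∫ z in (0:ℝ)..1, g₂ z with hG₂
  have hG₁c : ContinuousOn G₁ (Icc (0:ℝ) 1) := by
    have hp : ContinuousOn (fun y => ∫ z in (0:ℝ)..y, g₁ z) (Icc (0:ℝ) 1) := by
      have := intervalIntegral.continuousOn_primitive_interval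
        (f := g₁) (a := (0:ℝ)) (b := 1) (μ := volume) (by rwa [uIcc_of_le zero_le_one])
      rwa [uIcc_of_le zero_le_one] at this
    exact hp.sub ((continuousOn_id.smul continuousOn_const))
  have hG₂c : ContinuousOn G₂ (Icc (0:ℝ) 1) := by
    have hp : ContinuousOn (fun y => ∫ z in (0:ℝ)..y, g₂ z) (Icc (0:ℝ) 1) := by
      have := intervalIntegral.continuousOn_primitive_interval
        (f := g₂) (a := (0:ℝ)) (b := 1) (μ := volume) (by rwa [uIcc_of_le zero_le_one])
      rwa [uIcc_of_le zero_le_one] at this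
    exact hp.sub ((continuousOn_id.smul continuousOn_const))
  have hG₁i : IntervalIntegrable G₁ volume 0 1 := by
    apply ContinuousOn.intervalIntegrable
    rwa [uIcc_of_le zero_le_one]
  have hG₂i : IntervalIntegrable G₂ volume 0 1 := by
    apply ContinuousOn.intervalIntegrable
    rwa [uIcc_of_le zero_le_one]
  have hC : (∫ y in (0:ℝ)..1, G₁ y) - (∫ y in (0:ℝ)..1, G₂ y)
      = ∫ y in (0:ℝ)..1, (G₁ y - G₂ y) :=
    (intervalIntegral.integral_sub hG₁i hG₂i).symm
  have hCbound : |∫ y in (0:ℝ)..1, (G₁ y - G₂ y)| ≤ 2 * I := by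
    have := intervalIntegral.norm_integral_le_of_norm_le_const
      (a := (0:ℝ)) (b := 1) (C := 2 * I) (f := fun y => G₁ y - G₂ y) ?_
    · simpa using this
    · intro y hy
      rw [uIoc_of_le zero_le_one] at hy
      have hy' : y ∈ Icc (0:ℝ) 1 := ⟨le_of_lt hy.1, hy.2⟩
      have hsplit : G₁ y - G₂ y
          = (∫ z in (0:ℝ)..y, d z) - y * ∫ z in (0:ℝ)..1, d z := by
        rw [hG₁, hG₂]
        have e1 := intervalIntegral.integral_sub (hI1 0 y h01 hy') (hI2 0 y h01 hy')
        have e2 := intervalIntegral.integral_sub (hI1 0 1 h01 h11) (hI2 0 1 h01 h11)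
        simp only [hd] at e1 e2 ⊢
        rw [e1, e2]; ring
      show |G₁ y - G₂ y| ≤ 2 * I
      rw [hsplit]
      have b1 := hbound y hy'
      have b2 := hbound 1 h11
      have hy0 : 0 ≤ y := hy'.1
      have hy1 : y ≤ 1 := hy'.2
      calc |(∫ z in (0:ℝ)..y, d z) - y * ∫ z in (0:ℝ)..1, d z|
          ≤ |∫ z in (0:ℝ)..y, d z| + |y * ∫ z in (0:ℝ)..1, d z| := abs_sub _ _
        _ ≤ I + 1 * I := by
            gcongr
            rw [abs_mul, abs_of_nonneg hy0]
            calc y * |∫ z in (0:ℝ)..1, d z| ≤ 1 * I := by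
                  apply mul_le_mul hy1 b2 (abs_nonneg _) zero_le_one
              _ = 1 * I := rfl
        _ = 2 * I := by ring
  -- conclude
  have hx0 : 0 ≤ x := hx.1
  have hx1 : x ≤ 1 := hx.2
  have hDinv : Dinv g₁ x - Dinv g₂ x
      = (∫ y in (0:ℝ)..x, d y) - x * (∫ y in (0:ℝ)..1, d y)
        - ∫ y in (0:ℝ)..1, (G₁ y - G₂ y) := by
    rw [← hC]
    simp only [Dinv, ← hA, ← hB, hG₁, hG₂]
    ring
  rw [hDinv]
  have b1 := hbound x hx
  have b2 := hbound 1 h11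
  calc |(∫ y in (0:ℝ)..x, d y) - x * (∫ y in (0:ℝ)..1, d y)
        - ∫ y in (0:ℝ)..1, (G₁ y - G₂ y)|
      ≤ |(∫ y in (0:ℝ)..x, d y) - x * (∫ y in (0:ℝ)..1, d y)|
        + |∫ y in (0:ℝ)..1, (G₁ y - G₂ y)| := abs_sub _ _
    _ ≤ (|∫ y in (0:ℝ)..x, d y| + |x * ∫ y in (0:ℝ)..1, d y|) + 2 * I :=
        add_le_add (abs_sub _ _) hCbound
    _ ≤ (I + 1 * I) + 2 * I := by
        refine add_le_add (add_le_add b1 ?_) le_rfl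
        rw [abs_mul, abs_of_nonneg hx0]
        exact mul_le_mul hx1 b2 (abs_nonneg _) zero_le_one
    _ = 4 * I := by ring

end Aux

/-- `‖𝔲(R₁,S₁) − 𝔲(R₂,S₂)‖_{L^∞(𝕋)} ≤ 2κ (‖R₁−R₂‖_{L¹} + ‖S₁−S₂‖_{L¹})`. -/
theorem uCon_Linfty_Lipschitz
    (κ : ℝ) (hκ : 1 < κ)
    (c : ℝ → ℝ) (hc : Continuous c)
    (hlb : ∀ r, κ⁻¹ ≤ c r) (hub : ∀ r, c r ≤ κ)
    (F : ℝ → ℝ) (hF : ∀ u, F u = ∫ r in (0:ℝ)..u, c r)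
    (R₁ S₁ R₂ S₂ : ℝ → ℝ)
    (hR₁ : IntegrableOn R₁ (Set.Icc (0:ℝ) 1)) (hS₁ : IntegrableOn S₁ (Set.Icc (0:ℝ) 1))
    (hR₂ : IntegrableOn R₂ (Set.Icc (0:ℝ) 1)) (hS₂ : IntegrableOn S₂ (Set.Icc (0:ℝ) 1)) :
    ∀ x ∈ Set.Icc (0:ℝ) 1,
      |uCon F R₁ S₁ x - uCon F R₂ S₂ x| ≤
        2 * κ * ((∫ y in (0:ℝ)..1, |R₁ y - R₂ y|) + ∫ y in (0:ℝ)..1, |S₁ y - S₂ y|) := by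
  intro x hx
  have hκ0 : (0:ℝ) < κ := lt_trans one_pos hκ
  set g₁ := fun y => (R₁ y - S₁ y) / 2 with hg₁
  set g₂ := fun y => (R₂ y - S₂ y) / 2 with hg₂
  have hg₁int : IntegrableOn g₁ (Set.Icc (0:ℝ) 1) := (hR₁.sub hS₁).div_const 2
  have hg₂int : IntegrableOn g₂ (Set.Icc (0:ℝ) 1) := (hR₂.sub hS₂).div_const 2
  have step1 : |uCon F R₁ S₁ x - uCon F R₂ S₂ x| ≤ κ * |Dinv g₁ x - Dinv g₂ x| :=
    aux_lip hκ hc hlb hF _ _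
  have step2 : |Dinv g₁ x - Dinv g₂ x| ≤ 4 * ∫ y in (0:ℝ)..1, |g₁ y - g₂ y| :=
    aux_dinv hg₁int hg₂int hx
  -- integrability of the abs differences
  have hIR : IntervalIntegrable (fun y => |R₁ y - R₂ y|) volume 0 1 := by
    apply IntegrableOn.intervalIntegrable
    rw [Set.uIcc_of_le zero_le_one]
    exact (hR₁.sub hR₂).abs
  have hIS : IntervalIntegrable (fun y => |S₁ y - S₂ y|) volume 0 1 := by
    apply IntegrableOn.intervalIntegrable
    rw [Set.uIcc_of_le zero_le_one]
    exact (hS₁.sub hS₂).abs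
  have hIg : IntervalIntegrable (fun y => |g₁ y - g₂ y|) volume 0 1 := by
    apply IntegrableOn.intervalIntegrable
    rw [Set.uIcc_of_le zero_le_one]
    exact (hg₁int.sub hg₂int).abs
  have step3 : (∫ y in (0:ℝ)..1, |g₁ y - g₂ y|)
      ≤ (1/2) * ((∫ y in (0:ℝ)..1, |R₁ y - R₂ y|) + ∫ y in (0:ℝ)..1, |S₁ y - S₂ y|) := by
    have hmono : (∫ y in (0:ℝ)..1, |g₁ y - g₂ y|)
        ≤ ∫ y in (0:ℝ)..1, (|R₁ y - R₂ y| / 2 + |S₁ y - S₂ y| / 2) := by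
      apply intervalIntegral.integral_mono_on zero_le_one hIg
        ((hIR.div_const 2).add (hIS.div_const 2))
      intro y _
      have : g₁ y - g₂ y = ((R₁ y - R₂ y) - (S₁ y - S₂ y)) / 2 := by
        simp only [hg₁, hg₂]; ring
      rw [this, abs_div]
      have := abs_sub (R₁ y - R₂ y) (S₁ y - S₂ y)
      rw [abs_of_pos (by norm_num : (0:ℝ) < 2)]
      linarith
    calc (∫ y in (0:ℝ)..1, |g₁ y - g₂ y|)
        ≤ ∫ y in (0:ℝ)..1, (|R₁ y - R₂ y| / 2 + |S₁ y - S₂ y| / 2) := hmono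
      _ = (1/2) * ((∫ y in (0:ℝ)..1, |R₁ y - R₂ y|) + ∫ y in (0:ℝ)..1, |S₁ y - S₂ y|) := by
          rw [intervalIntegral.integral_add (hIR.div_const 2) (hIS.div_const 2),
            intervalIntegral.integral_div, intervalIntegral.integral_div]
          ring
  calc |uCon F R₁ S₁ x - uCon F R₂ S₂ x| ≤ κ * |Dinv g₁ x - Dinv g₂ x| := step1
    _ ≤ κ * (4 * ∫ y in (0:ℝ)..1, |g₁ y - g₂ y|) := by gcongr
    _ ≤ κ * (4 * ((1/2) * ((∫ y in (0:ℝ)..1, |R₁ y - R₂ y|)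
          + ∫ y in (0:ℝ)..1, |S₁ y - S₂ y|))) := by gcongr
    _ = 2 * κ * ((∫ y in (0:ℝ)..1, |R₁ y - R₂ y|) + ∫ y in (0:ℝ)..1, |S₁ y - S₂ y|) := by
        ring
end

section
/- Let κ > 1 and c : ℝ → [κ⁻¹, κ] be Lipschitz with constant κ, F(u) = ∫₀^u c, and u_i = 𝔲(R_i, S_i) = F⁻¹(∂ₓ⁻¹((R_i − S_i)/2)) for (R_i, S_i) ∈ L²(𝕋)², i = 1,2. Then ‖c(u₁)R₁ − c(u₂)R₂‖_{L²} + ‖c(u₁)S₁ − c(u₂)S₂‖_{L²} ≤ C(κ) (1 + min(‖R₁‖_{L²}, ‖R₂‖_{L²}) + min(‖S₁‖_{L²}, ‖S₂‖_{L²})) · (‖R₁ − R₂‖_{L²} + ‖S₁ − S₂‖_{L²}) for a constant C(κ) depending only on κ. -/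
open MeasureTheory

/-- The `L²(𝕋)` norm on the torus `[0,1]`. -/
noncomputable def L2n (f : ℝ → ℝ) : ℝ := Real.sqrt (∫ x in (0:ℝ)..1, (f x) ^ 2)

open Set

/-! ### Auxiliary lemmas about `L2n` -/

lemma L2n_eq (f : ℝ → ℝ) : L2n f = Real.sqrt (∫ x in Ioc (0:ℝ) 1, f x ^ 2) := by
  rw [L2n, intervalIntegral.integral_of_le zero_le_one]

lemma L2n_nonneg (f : ℝ → ℝ) : 0 ≤ L2n f := Real.sqrt_nonneg _

lemma sq_L2n (f : ℝ → ℝ) : L2n f ^ 2 = ∫ x in Ioc (0:ℝ) 1, f x ^ 2 := by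
  rw [L2n_eq, Real.sq_sqrt]
  exact integral_nonneg fun x => sq_nonneg _

lemma L2n_mono (f g : ℝ → ℝ)
    (h : ∀ᵐ x ∂(volume.restrict (Ioc (0:ℝ) 1)), f x ^ 2 ≤ g x ^ 2)
    (hg : IntegrableOn (fun x => g x ^ 2) (Ioc (0:ℝ) 1)) : L2n f ≤ L2n g := by
  rw [L2n_eq, L2n_eq]
  exact Real.sqrt_le_sqrt
    (integral_mono_of_nonneg (Filter.Eventually.of_forall fun x => sq_nonneg _) hg h)

lemma L2n_sq_congr (f g : ℝ → ℝ) (h : ∀ x, f x ^ 2 = g x ^ 2) : L2n f = L2n g := by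
  rw [L2n, L2n]; simp only [h]

lemma L2n_const_mul (k : ℝ) (f : ℝ → ℝ) : L2n (fun x => k * f x) = |k| * L2n f := by
  rw [L2n_eq, L2n_eq]
  simp only [mul_pow]
  rw [integral_const_mul, Real.sqrt_mul (sq_nonneg k), Real.sqrt_sq_eq_abs]

lemma sqrt_add_le' (a b : ℝ) : Real.sqrt (a + b) ≤ Real.sqrt a + Real.sqrt b := by
  rcases le_or_gt a 0 with ha | ha
  · calc Real.sqrt (a + b) ≤ Real.sqrt b := Real.sqrt_le_sqrt (by linarith)
      _ ≤ _ := le_add_of_nonneg_left (Real.sqrt_nonneg a)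
  rcases le_or_gt b 0 with hb | hb
  · calc Real.sqrt (a + b) ≤ Real.sqrt a := Real.sqrt_le_sqrt (by linarith)
      _ ≤ _ := le_add_of_nonneg_right (Real.sqrt_nonneg b)
  · have h1 : a + b ≤ (Real.sqrt a + Real.sqrt b) ^ 2 := by
      have := Real.sq_sqrt ha.le; have := Real.sq_sqrt hb.le
      nlinarith [Real.sqrt_nonneg a, Real.sqrt_nonneg b]
    calc Real.sqrt (a + b) ≤ Real.sqrt ((Real.sqrt a + Real.sqrt b) ^ 2) := Real.sqrt_le_sqrt h1
      _ = _ := Real.sqrt_sq (by positivity)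

lemma L2n_add_le (f g : ℝ → ℝ)
    (hf2 : IntegrableOn (fun x => f x ^ 2) (Ioc (0:ℝ) 1))
    (hg2 : IntegrableOn (fun x => g x ^ 2) (Ioc (0:ℝ) 1)) :
    L2n (fun x => f x + g x) ≤ Real.sqrt 2 * (L2n f + L2n g) := by
  have hint : IntegrableOn (fun x => 2 * f x ^ 2 + 2 * g x ^ 2) (Ioc (0:ℝ) 1) :=
    (hf2.const_mul 2).add (hg2.const_mul 2)
  have h1 : (∫ x in Ioc (0:ℝ) 1, (f x + g x) ^ 2)
      ≤ ∫ x in Ioc (0:ℝ) 1, (2 * f x ^ 2 + 2 * g x ^ 2) :=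
    integral_mono_of_nonneg (Filter.Eventually.of_forall fun x => sq_nonneg _) hint
      (Filter.Eventually.of_forall fun x => by dsimp only; nlinarith [sq_nonneg (f x - g x)])
  have h2 : (∫ x in Ioc (0:ℝ) 1, (2 * f x ^ 2 + 2 * g x ^ 2))
      = 2 * (∫ x in Ioc (0:ℝ) 1, f x ^ 2) + 2 * ∫ x in Ioc (0:ℝ) 1, g x ^ 2 := by
    rw [integral_add (hf2.const_mul 2) (hg2.const_mul 2), integral_const_mul, integral_const_mul]
  calc L2n (fun x => f x + g x)
      ≤ Real.sqrt (2 * (∫ x in Ioc (0:ℝ) 1, f x ^ 2) + 2 * ∫ x in Ioc (0:ℝ) 1, g x ^ 2) := by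
        rw [L2n_eq]; exact Real.sqrt_le_sqrt (h2 ▸ h1)
    _ ≤ Real.sqrt (2 * ∫ x in Ioc (0:ℝ) 1, f x ^ 2)
        + Real.sqrt (2 * ∫ x in Ioc (0:ℝ) 1, g x ^ 2) := sqrt_add_le' _ _
    _ = Real.sqrt 2 * (L2n f + L2n g) := by
        rw [L2n_eq, L2n_eq, Real.sqrt_mul (by norm_num), Real.sqrt_mul (by norm_num)]; ring

lemma vol_Ioc01 : (volume (Ioc (0:ℝ) 1)).toReal = 1 := by
  rw [Real.volume_Ioc]; norm_num

lemma abs_integral_le_L2n (f : ℝ → ℝ)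
    (hf2 : IntegrableOn (fun x => f x ^ 2) (Ioc (0:ℝ) 1)) :
    (∫ x in Ioc (0:ℝ) 1, |f x|) ≤ L2n f := by
  set L := L2n f with hLdef
  have hL0 : 0 ≤ L := Real.sqrt_nonneg _
  rcases eq_or_lt_of_le hL0 with h0 | hpos
  · have hI : (∫ x in Ioc (0:ℝ) 1, f x ^ 2) = 0 := by
      rw [← sq_L2n f, ← hLdef, ← h0]; norm_num
    have hz : (fun x => f x ^ 2) =ᵐ[volume.restrict (Ioc (0:ℝ) 1)] 0 :=
      (integral_eq_zero_iff_of_nonneg (fun x => sq_nonneg _) hf2).mp hI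
    have : (∫ x in Ioc (0:ℝ) 1, |f x|) = 0 := by
      rw [integral_congr_ae (g := fun _ => (0:ℝ)) ?_, integral_zero]
      · filter_upwards [hz] with x hx
        have : f x = 0 := by
          have := hx; simp only [Pi.zero_apply] at this
          exact pow_eq_zero_iff (n := 2) (by norm_num) |>.mp this
        simp [this]
    rw [this, ← h0]
  · have key : (∫ x in Ioc (0:ℝ) 1, |f x|)
        ≤ ∫ x in Ioc (0:ℝ) 1, (f x ^ 2 / (2 * L) + L / 2) := by
      refine integral_mono_of_nonneg (Filter.Eventually.of_forall fun x => abs_nonneg _)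
        ((hf2.div_const (2*L)).add (integrableOn_const (by rw [Real.volume_Ioc]; norm_num)))
        (Filter.Eventually.of_forall fun x => ?_)
      dsimp only
      have h2L : (0:ℝ) < 2 * L := by linarith
      have heq : f x ^ 2 / (2 * L) + L / 2 = (f x ^ 2 + L ^ 2) / (2 * L) := by
        field_simp
      rw [heq, le_div_iff₀ h2L]
      nlinarith [sq_nonneg (|f x| - L), sq_abs (f x)]
    have : (∫ x in Ioc (0:ℝ) 1, (f x ^ 2 / (2 * L) + L / 2)) = L := by
      rw [integral_add (hf2.div_const (2*L))
        (integrableOn_const (by rw [Real.volume_Ioc]; norm_num)),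
        integral_div, ← sq_L2n f, setIntegral_const, measureReal_def, vol_Ioc01, ← hLdef]
      field_simp
      ring
    linarith [key, this.le]

/-! ### Integrability helpers -/

lemma int_of_sq (R : ℝ → ℝ) (hm : Measurable R)
    (h2 : IntegrableOn (fun x => R x ^ 2) (Icc (0:ℝ) 1)) :
    IntegrableOn R (Icc (0:ℝ) 1) := by
  have hc1 : IntegrableOn (fun _ : ℝ => (1:ℝ)) (Icc (0:ℝ) 1) := by
    refine integrableOn_const ?_; rw [Real.volume_Icc]; norm_num
  have hsum : IntegrableOn (fun x => (R x ^ 2 + 1) / 2) (Icc (0:ℝ) 1) :=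
    (h2.add hc1).div_const 2
  refine Integrable.mono' hsum hm.aestronglyMeasurable.restrict
    (Filter.Eventually.of_forall fun x => ?_)
  rw [Real.norm_eq_abs]
  nlinarith [sq_nonneg (|R x| - 1), sq_abs (R x)]

lemma sq_diff_int (P Q : ℝ → ℝ) (hPm : Measurable P) (hQm : Measurable Q)
    (hP2 : IntegrableOn (fun x => P x ^ 2) (Ioc (0:ℝ) 1))
    (hQ2 : IntegrableOn (fun x => Q x ^ 2) (Ioc (0:ℝ) 1)) :
    IntegrableOn (fun x => (P x - Q x) ^ 2) (Ioc (0:ℝ) 1) := by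
  have hsum : IntegrableOn (fun x => 2 * P x ^ 2 + 2 * Q x ^ 2) (Ioc (0:ℝ) 1) :=
    (hP2.const_mul 2).add (hQ2.const_mul 2)
  have hmeas : AEStronglyMeasurable (fun x => (P x - Q x) ^ 2)
      (volume.restrict (Ioc (0:ℝ) 1)) :=
    ((hPm.sub hQm).pow_const 2).aestronglyMeasurable.restrict
  have hbd : ∀ x, ‖(P x - Q x) ^ 2‖ ≤ 2 * P x ^ 2 + 2 * Q x ^ 2 := fun x => by
    rw [Real.norm_eq_abs, abs_of_nonneg (sq_nonneg _)]
    nlinarith [sq_nonneg (P x + Q x)]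
  exact Integrable.mono' hsum hmeas (Filter.Eventually.of_forall hbd)

/-! ### Properties of `F` and its inverse -/

section Fsec
variable {κ : ℝ} {c F : ℝ → ℝ}

lemma F_sub (hc : Continuous c) (hF : ∀ v, F v = ∫ r in (0:ℝ)..v, c r) (x y : ℝ) :
    F y - F x = ∫ r in x..y, c r := by
  rw [hF, hF]
  exact intervalIntegral.integral_interval_sub_left
    (hc.intervalIntegrable _ _) (hc.intervalIntegrable _ _)

lemma F_lower (hc : Continuous c) (hlb : ∀ r, κ⁻¹ ≤ c r)
    (hF : ∀ v, F v = ∫ r in (0:ℝ)..v, c r) {x y : ℝ} (hxy : x ≤ y) :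
    κ⁻¹ * (y - x) ≤ F y - F x := by
  rw [F_sub hc hF]
  have h1 : κ⁻¹ * (y - x) = ∫ _ in x..y, κ⁻¹ := by
    rw [intervalIntegral.integral_const, smul_eq_mul]; ring
  rw [h1]
  exact intervalIntegral.integral_mono_on hxy intervalIntegrable_const
    (hc.intervalIntegrable _ _) (fun r _ => hlb r)

lemma F_upper (hc : Continuous c) (hub : ∀ r, c r ≤ κ)
    (hF : ∀ v, F v = ∫ r in (0:ℝ)..v, c r) {x y : ℝ} (hxy : x ≤ y) :
    F y - F x ≤ κ * (y - x) := by
  rw [F_sub hc hF]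
  have h1 : κ * (y - x) = ∫ _ in x..y, κ := by
    rw [intervalIntegral.integral_const, smul_eq_mul]; ring
  rw [h1]
  exact intervalIntegral.integral_mono_on hxy (hc.intervalIntegrable _ _)
    intervalIntegrable_const (fun r _ => hub r)

lemma F_cont (hκ : 1 < κ) (hc : Continuous c) (hlb : ∀ r, κ⁻¹ ≤ c r) (hub : ∀ r, c r ≤ κ)
    (hF : ∀ v, F v = ∫ r in (0:ℝ)..v, c r) : Continuous F := by
  have hκ0 : (0:ℝ) < κ := lt_trans one_pos hκ
  have : LipschitzWith (Real.toNNReal κ) F := by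
    refine LipschitzWith.of_dist_le_mul fun x y => ?_
    rw [Real.dist_eq, Real.dist_eq, Real.coe_toNNReal _ hκ0.le]
    rcases le_total x y with h | h
    · have h1 := F_lower hc hlb hF h
      have h2 := F_upper hc hub hF h
      have hinv : 0 < κ⁻¹ := inv_pos.mpr hκ0
      rw [abs_of_nonpos (by nlinarith), abs_of_nonpos (by linarith)]
      linarith
    · have h1 := F_lower hc hlb hF h
      have h2 := F_upper hc hub hF h
      have hinv : 0 < κ⁻¹ := inv_pos.mpr hκ0
      rw [abs_of_nonneg (by nlinarith), abs_of_nonneg (by linarith)]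
      linarith
  exact this.continuous

lemma F_surj (hκ : 1 < κ) (hc : Continuous c) (hlb : ∀ r, κ⁻¹ ≤ c r) (hub : ∀ r, c r ≤ κ)
    (hF : ∀ v, F v = ∫ r in (0:ℝ)..v, c r) : Function.Surjective F := by
  have hκ0 : (0:ℝ) < κ := lt_trans one_pos hκ
  have h0 : F 0 = 0 := by rw [hF]; simp
  intro p
  rcases le_total 0 p with hp | hp
  · have hle : (0:ℝ) ≤ κ * p := by positivity
    have h1 : p ≤ F (κ * p) := by
      have := F_lower hc hlb hF hle
      rw [h0, sub_zero, sub_zero] at this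
      have heq : κ⁻¹ * (κ * p) = p := by field_simp
      nlinarith [this]
    have hmem : p ∈ Icc (F 0) (F (κ * p)) := ⟨h0.symm ▸ hp, h1⟩
    obtain ⟨v, _, hv⟩ := intermediate_value_Icc hle
      (F_cont hκ hc hlb hub hF).continuousOn hmem
    exact ⟨v, hv⟩
  · have hle : κ * p ≤ 0 := by nlinarith
    have h1 : F (κ * p) ≤ p := by
      have h2 := F_lower hc hlb hF hle
      rw [h0, zero_sub] at h2
      have h3 : κ⁻¹ * (0 - κ * p) = -p := by field_simp; ring
      nlinarith [h2]
    have hmem : p ∈ Icc (F (κ * p)) (F 0) := ⟨h1, h0.symm ▸ hp⟩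
    obtain ⟨v, _, hv⟩ := intermediate_value_Icc hle
      (F_cont hκ hc hlb hub hF).continuousOn hmem
    exact ⟨v, hv⟩

lemma invF_lip (hκ : 1 < κ) (hc : Continuous c) (hlb : ∀ r, κ⁻¹ ≤ c r) (hub : ∀ r, c r ≤ κ)
    (hF : ∀ v, F v = ∫ r in (0:ℝ)..v, c r) (p q : ℝ) :
    |Function.invFun F p - Function.invFun F q| ≤ κ * |p - q| := by
  have hκ0 : (0:ℝ) < κ := lt_trans one_pos hκ
  have hs := F_surj hκ hc hlb hub hF
  have hp : F (Function.invFun F p) = p := Function.invFun_eq (hs p)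
  have hq : F (Function.invFun F q) = q := Function.invFun_eq (hs q)
  set x := Function.invFun F p
  set y := Function.invFun F q
  have hinv : 0 < κ⁻¹ := inv_pos.mpr hκ0
  have key : κ⁻¹ * |x - y| ≤ |p - q| := by
    rcases le_total x y with h | h
    · have h1 := F_lower hc hlb hF h
      rw [hp, hq] at h1
      rw [abs_of_nonpos (by linarith), abs_of_nonpos (by nlinarith)]
      nlinarith
    · have h1 := F_lower hc hlb hF h
      rw [hp, hq] at h1
      rw [abs_of_nonneg (by linarith), abs_of_nonneg (by nlinarith)]
      nlinarith
  calc |x - y| = κ * (κ⁻¹ * |x - y|) := by field_simp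
    _ ≤ κ * |p - q| := by nlinarith

lemma invF_cont (hκ : 1 < κ) (hc : Continuous c) (hlb : ∀ r, κ⁻¹ ≤ c r) (hub : ∀ r, c r ≤ κ)
    (hF : ∀ v, F v = ∫ r in (0:ℝ)..v, c r) : Continuous (Function.invFun F) := by
  have hκ0 : (0:ℝ) < κ := lt_trans one_pos hκ
  have : LipschitzWith (Real.toNNReal κ) (Function.invFun F) := by
    refine LipschitzWith.of_dist_le_mul fun x y => ?_
    rw [Real.dist_eq, Real.dist_eq, Real.coe_toNNReal _ hκ0.le]
    exact invF_lip hκ hc hlb hub hF x y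
  exact this.continuous

end Fsec

/-! ### The `Dinv` difference bound -/

lemma primitive_contOn {g : ℝ → ℝ} (hg : IntegrableOn g (Icc (0:ℝ) 1)) :
    ContinuousOn (fun t => ∫ z in (0:ℝ)..t, g z) (Icc (0:ℝ) 1) := by
  have := intervalIntegral.continuousOn_primitive_interval
    (a := (0:ℝ)) (b := 1) (μ := volume) (f := g) ?_
  · rwa [uIcc_of_le zero_le_one] at this
  · rwa [uIcc_of_le zero_le_one]

lemma intervalIntegrable_of_Icc {g : ℝ → ℝ} (hg : IntegrableOn g (Icc (0:ℝ) 1))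
    {t : ℝ} (ht : t ∈ Icc (0:ℝ) 1) : IntervalIntegrable g volume 0 t := by
  refine IntegrableOn.intervalIntegrable ?_
  rw [uIcc_of_le ht.1]
  exact hg.mono_set (Icc_subset_Icc le_rfl ht.2)

lemma primitive_abs_le {g : ℝ → ℝ} (hg : IntegrableOn g (Icc (0:ℝ) 1))
    {t : ℝ} (ht : t ∈ Icc (0:ℝ) 1) :
    |∫ z in (0:ℝ)..t, g z| ≤ ∫ z in Ioc (0:ℝ) 1, |g z| := by
  rw [intervalIntegral.integral_of_le ht.1]
  calc |∫ z in Ioc (0:ℝ) t, g z| ≤ ∫ z in Ioc (0:ℝ) t, |g z| := by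
        simpa [Real.norm_eq_abs] using
          norm_integral_le_integral_norm (μ := volume.restrict (Ioc (0:ℝ) t)) g
    _ ≤ ∫ z in Ioc (0:ℝ) 1, |g z| := by
        refine setIntegral_mono_set ((hg.mono_set Ioc_subset_Icc_self).norm) ?_ ?_
        · exact Filter.Eventually.of_forall fun x => abs_nonneg _
        · exact HasSubset.Subset.eventuallyLE (Ioc_subset_Ioc le_rfl ht.2)

lemma Dinv_diff_bound {g₁ g₂ : ℝ → ℝ}
    (h₁ : IntegrableOn g₁ (Icc (0:ℝ) 1)) (h₂ : IntegrableOn g₂ (Icc (0:ℝ) 1))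
    {x : ℝ} (hx : x ∈ Icc (0:ℝ) 1) :
    |Dinv g₁ x - Dinv g₂ x| ≤ 4 * ∫ y in Ioc (0:ℝ) 1, |g₁ y - g₂ y| := by
  set Δ : ℝ → ℝ := fun y => g₁ y - g₂ y with hΔdef
  have hΔ : IntegrableOn Δ (Icc (0:ℝ) 1) := h₁.sub h₂
  set A : ℝ := ∫ y in Ioc (0:ℝ) 1, |Δ y| with hAdef
  have hA0 : 0 ≤ A := integral_nonneg fun y => abs_nonneg _
  have hsub : ∀ t ∈ Icc (0:ℝ) 1,
      (∫ z in (0:ℝ)..t, g₁ z) - (∫ z in (0:ℝ)..t, g₂ z) = ∫ z in (0:ℝ)..t, Δ z := by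
    intro t ht
    rw [← intervalIntegral.integral_sub (intervalIntegrable_of_Icc h₁ ht)
      (intervalIntegrable_of_Icc h₂ ht)]
  have hbound : ∀ t ∈ Icc (0:ℝ) 1, |∫ z in (0:ℝ)..t, Δ z| ≤ A :=
    fun t ht => primitive_abs_le hΔ ht
  have h1mem : (1:ℝ) ∈ Icc (0:ℝ) 1 := ⟨zero_le_one, le_rfl⟩
  set h₁' : ℝ → ℝ := fun y => (∫ z in (0:ℝ)..y, g₁ z) - y * ∫ z in (0:ℝ)..1, g₁ z with hh1
  set h₂' : ℝ → ℝ := fun y => (∫ z in (0:ℝ)..y, g₂ z) - y * ∫ z in (0:ℝ)..1, g₂ z with hh2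
  have hc₁ : ContinuousOn h₁' (Icc (0:ℝ) 1) :=
    (primitive_contOn h₁).sub ((continuous_id.mul continuous_const).continuousOn)
  have hc₂ : ContinuousOn h₂' (Icc (0:ℝ) 1) :=
    (primitive_contOn h₂).sub ((continuous_id.mul continuous_const).continuousOn)
  have hi₁ : IntervalIntegrable h₁' volume 0 1 := by
    apply ContinuousOn.intervalIntegrable; rwa [uIcc_of_le zero_le_one]
  have hi₂ : IntervalIntegrable h₂' volume 0 1 := by
    apply ContinuousOn.intervalIntegrable; rwa [uIcc_of_le zero_le_one]
  have hthird : (∫ y in (0:ℝ)..1, h₁' y) - (∫ y in (0:ℝ)..1, h₂' y)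
      = ∫ y in (0:ℝ)..1, (h₁' y - h₂' y) :=
    (intervalIntegral.integral_sub hi₁ hi₂).symm
  have hdiffpt : ∀ y ∈ Icc (0:ℝ) 1,
      h₁' y - h₂' y = (∫ z in (0:ℝ)..y, Δ z) - y * ∫ z in (0:ℝ)..1, Δ z := by
    intro y hy
    have e1 := hsub y hy
    have e2 := hsub 1 h1mem
    simp only [hh1, hh2]
    linear_combination e1 - y * e2
  have hthird_bound : |∫ y in (0:ℝ)..1, (h₁' y - h₂' y)| ≤ 2 * A := by
    calc |∫ y in (0:ℝ)..1, (h₁' y - h₂' y)| ≤ ∫ y in (0:ℝ)..1, |h₁' y - h₂' y| :=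
          intervalIntegral.abs_integral_le_integral_abs zero_le_one
      _ ≤ ∫ _ in (0:ℝ)..1, 2 * A := by
          refine intervalIntegral.integral_mono_on zero_le_one ?_ intervalIntegrable_const ?_
          · apply ContinuousOn.intervalIntegrable
            rw [uIcc_of_le zero_le_one]
            exact (hc₁.sub hc₂).abs
          · intro y hy
            rw [hdiffpt y hy]
            have b1 := hbound y hy
            have b2 := hbound 1 h1mem
            have hy1 : |y| ≤ 1 := by rw [abs_of_nonneg hy.1]; exact hy.2
            calc |(∫ z in (0:ℝ)..y, Δ z) - y * ∫ z in (0:ℝ)..1, Δ z|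
                ≤ |∫ z in (0:ℝ)..y, Δ z| + |y * ∫ z in (0:ℝ)..1, Δ z| := abs_sub _ _
              _ ≤ A + 1 * A := by
                  rw [abs_mul]
                  have := abs_nonneg (∫ z in (0:ℝ)..1, Δ z)
                  gcongr
              _ = 2 * A := by ring
      _ = 2 * A := by rw [intervalIntegral.integral_const, smul_eq_mul]; ring
  have expand : Dinv g₁ x - Dinv g₂ x
      = ((∫ z in (0:ℝ)..x, Δ z) - x * ∫ z in (0:ℝ)..1, Δ z)
        - ∫ y in (0:ℝ)..1, (h₁' y - h₂' y) := by
    have e1 := hsub x hx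
    have e2 := hsub 1 h1mem
    rw [Dinv, Dinv, ← hthird]
    simp only [hh1, hh2]
    linear_combination e1 - x * e2
  rw [expand]
  have b1 := hbound x hx
  have b2 := hbound 1 h1mem
  have hx1 : |x| ≤ 1 := by rw [abs_of_nonneg hx.1]; exact hx.2
  calc |((∫ z in (0:ℝ)..x, Δ z) - x * ∫ z in (0:ℝ)..1, Δ z)
        - ∫ y in (0:ℝ)..1, (h₁' y - h₂' y)|
      ≤ |(∫ z in (0:ℝ)..x, Δ z) - x * ∫ z in (0:ℝ)..1, Δ z|
        + |∫ y in (0:ℝ)..1, (h₁' y - h₂' y)| := abs_sub _ _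
    _ ≤ (|∫ z in (0:ℝ)..x, Δ z| + |x * ∫ z in (0:ℝ)..1, Δ z|) + 2 * A := by
        gcongr
        · exact abs_sub _ _
    _ ≤ (A + 1 * A) + 2 * A := by
        gcongr
        rw [abs_mul]
        have := abs_nonneg (∫ z in (0:ℝ)..1, Δ z)
        gcongr
    _ = 4 * A := by ring

/-! ### The key inequality -/

lemma key_ineq (κ M : ℝ) (hκ : 1 < κ) (hM : 0 ≤ M) (a b P Q : ℝ → ℝ)
    (ha : AEStronglyMeasurable a (volume.restrict (Ioc (0:ℝ) 1)))
    (hb : AEStronglyMeasurable b (volume.restrict (Ioc (0:ℝ) 1)))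
    (haκ : ∀ x, |a x| ≤ κ)
    (habM : ∀ x ∈ Ioc (0:ℝ) 1, |a x - b x| ≤ M)
    (hPm : Measurable P) (hQm : Measurable Q)
    (hP2 : IntegrableOn (fun x => P x ^ 2) (Ioc (0:ℝ) 1))
    (hQ2 : IntegrableOn (fun x => Q x ^ 2) (Ioc (0:ℝ) 1)) :
    L2n (fun x => a x * P x - b x * Q x)
      ≤ Real.sqrt 2 * (κ * L2n (fun x => P x - Q x) + M * L2n Q) := by
  have hκ0 : (0:ℝ) < κ := lt_trans one_pos hκ
  have hPQ2 := sq_diff_int P Q hPm hQm hP2 hQ2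
  have habae : ∀ᵐ x ∂(volume.restrict (Ioc (0:ℝ) 1)), |a x - b x| ≤ M :=
    (ae_restrict_iff' measurableSet_Ioc).mpr (Filter.Eventually.of_forall habM)
  have hsq_a : ∀ x, a x ^ 2 ≤ κ ^ 2 := fun x => by
    nlinarith [haκ x, sq_abs (a x), abs_nonneg (a x)]
  have hf2 : IntegrableOn (fun x => (a x * (P x - Q x)) ^ 2) (Ioc (0:ℝ) 1) := by
    have hdom : IntegrableOn (fun x => κ ^ 2 * (P x - Q x) ^ 2) (Ioc (0:ℝ) 1) :=
      hPQ2.const_mul _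
    have hmeas : AEStronglyMeasurable (fun x => (a x * (P x - Q x)) ^ 2)
        (volume.restrict (Ioc (0:ℝ) 1)) :=
      ((ha.mul ((hPm.sub hQm).aestronglyMeasurable.restrict)).aemeasurable.pow_const 2
        ).aestronglyMeasurable
    have hbd : ∀ x, ‖(a x * (P x - Q x)) ^ 2‖ ≤ κ ^ 2 * (P x - Q x) ^ 2 := fun x => by
      rw [Real.norm_eq_abs, abs_of_nonneg (sq_nonneg _), mul_pow]
      nlinarith [sq_nonneg (P x - Q x), hsq_a x]
    exact Integrable.mono' hdom hmeas (Filter.Eventually.of_forall hbd)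
  have hg2 : IntegrableOn (fun x => ((a x - b x) * Q x) ^ 2) (Ioc (0:ℝ) 1) := by
    have hdom : IntegrableOn (fun x => M ^ 2 * Q x ^ 2) (Ioc (0:ℝ) 1) := hQ2.const_mul _
    have hmeas : AEStronglyMeasurable (fun x => ((a x - b x) * Q x) ^ 2)
        (volume.restrict (Ioc (0:ℝ) 1)) :=
      (((ha.sub hb).mul (hQm.aestronglyMeasurable.restrict)).aemeasurable.pow_const 2
        ).aestronglyMeasurable
    have hbd : ∀ᵐ x ∂(volume.restrict (Ioc (0:ℝ) 1)),
        ‖((a x - b x) * Q x) ^ 2‖ ≤ M ^ 2 * Q x ^ 2 := by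
      filter_upwards [habae] with x hx
      rw [Real.norm_eq_abs, abs_of_nonneg (sq_nonneg _), mul_pow]
      have h1 : (a x - b x) ^ 2 ≤ M ^ 2 := by
        nlinarith [sq_abs (a x - b x), abs_nonneg (a x - b x)]
      nlinarith [sq_nonneg (Q x)]
    exact Integrable.mono' hdom hmeas hbd
  have hcongr : L2n (fun x => a x * P x - b x * Q x)
      = L2n (fun x => a x * (P x - Q x) + (a x - b x) * Q x) :=
    L2n_sq_congr _ _ fun x => by ring
  rw [hcongr]
  have step1 : L2n (fun x => a x * (P x - Q x) + (a x - b x) * Q x)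
      ≤ Real.sqrt 2 * (L2n (fun x => a x * (P x - Q x)) + L2n (fun x => (a x - b x) * Q x)) :=
    L2n_add_le _ _ hf2 hg2
  have stepf : L2n (fun x => a x * (P x - Q x)) ≤ κ * L2n (fun x => P x - Q x) := by
    have hae : ∀ᵐ x ∂(volume.restrict (Ioc (0:ℝ) 1)),
        (a x * (P x - Q x)) ^ 2 ≤ (κ * (P x - Q x)) ^ 2 := by
      refine Filter.Eventually.of_forall fun x => ?_
      have := hsq_a x
      nlinarith [sq_nonneg (P x - Q x)]
    have hgint : IntegrableOn (fun x => (κ * (P x - Q x)) ^ 2) (Ioc (0:ℝ) 1) := by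
      have := hPQ2.const_mul (κ ^ 2); simp only [mul_pow]; exact this
    have h := L2n_mono _ _ hae hgint
    rwa [L2n_const_mul, abs_of_pos hκ0] at h
  have stepg : L2n (fun x => (a x - b x) * Q x) ≤ M * L2n Q := by
    have hae : ∀ᵐ x ∂(volume.restrict (Ioc (0:ℝ) 1)),
        ((a x - b x) * Q x) ^ 2 ≤ (M * Q x) ^ 2 := by
      filter_upwards [habae] with x hx
      have h1 : (a x - b x) ^ 2 ≤ M ^ 2 := by
        nlinarith [sq_abs (a x - b x), abs_nonneg (a x - b x)]
      nlinarith [sq_nonneg (Q x)]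
    have hgint : IntegrableOn (fun x => (M * Q x) ^ 2) (Ioc (0:ℝ) 1) := by
      have := hQ2.const_mul (M ^ 2); simp only [mul_pow]; exact this
    have h := L2n_mono _ _ hae hgint
    rwa [L2n_const_mul, abs_of_nonneg hM] at h
  have hs2 : (0:ℝ) ≤ Real.sqrt 2 := Real.sqrt_nonneg 2
  refine le_trans step1 ?_
  have h := add_le_add stepf stepg
  nlinarith [h]

/-! ### Main theorem -/

set_option maxHeartbeats 1000000 in
/-- with `u_i = 𝔲(R_i, S_i)`, one has
`‖c(u₁)R₁ − c(u₂)R₂‖_{L²} + ‖c(u₁)S₁ − c(u₂)S₂‖_{L²}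
  ≤ C(κ)(1 + min(‖R₁‖,‖R₂‖) + min(‖S₁‖,‖S₂‖))(‖R₁−R₂‖ + ‖S₁−S₂‖)`
for a constant `C(κ)` depending only on `κ`. -/
theorem cR_cS_L2_difference_bound (κ : ℝ) (hκ : 1 < κ) :
    ∃ C : ℝ, 0 < C ∧
      ∀ (c : ℝ → ℝ), Continuous c → (∀ a b, |c a - c b| ≤ κ * |a - b|) →
        (∀ r, κ⁻¹ ≤ c r) → (∀ r, c r ≤ κ) →
      ∀ (F : ℝ → ℝ), (∀ v, F v = ∫ r in (0:ℝ)..v, c r) →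
      ∀ (R₁ S₁ R₂ S₂ : ℝ → ℝ),
        Measurable R₁ → Measurable S₁ → Measurable R₂ → Measurable S₂ →
        IntegrableOn (fun x => (R₁ x) ^ 2) (Set.Icc (0:ℝ) 1) →
        IntegrableOn (fun x => (S₁ x) ^ 2) (Set.Icc (0:ℝ) 1) →
        IntegrableOn (fun x => (R₂ x) ^ 2) (Set.Icc (0:ℝ) 1) →
        IntegrableOn (fun x => (S₂ x) ^ 2) (Set.Icc (0:ℝ) 1) →
        L2n (fun x => c (uCon F R₁ S₁ x) * R₁ x - c (uCon F R₂ S₂ x) * R₂ x)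
          + L2n (fun x => c (uCon F R₁ S₁ x) * S₁ x - c (uCon F R₂ S₂ x) * S₂ x) ≤
        C * (1 + min (L2n R₁) (L2n R₂) + min (L2n S₁) (L2n S₂))
          * (L2n (fun x => R₁ x - R₂ x) + L2n (fun x => S₁ x - S₂ x)) := by
  have hκ0 : (0:ℝ) < κ := lt_trans one_pos hκ
  refine ⟨4 * κ ^ 2, by positivity, ?_⟩
  intro c hc hclip hlb hub F hF R₁ S₁ R₂ S₂ hmR₁ hmS₁ hmR₂ hmS₂ hR₁ hS₁ hR₂ hS₂
  -- Ioc versions of square integrability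
  have hR₁' : IntegrableOn (fun x => R₁ x ^ 2) (Ioc (0:ℝ) 1) := hR₁.mono_set Ioc_subset_Icc_self
  have hS₁' : IntegrableOn (fun x => S₁ x ^ 2) (Ioc (0:ℝ) 1) := hS₁.mono_set Ioc_subset_Icc_self
  have hR₂' : IntegrableOn (fun x => R₂ x ^ 2) (Ioc (0:ℝ) 1) := hR₂.mono_set Ioc_subset_Icc_self
  have hS₂' : IntegrableOn (fun x => S₂ x ^ 2) (Ioc (0:ℝ) 1) := hS₂.mono_set Ioc_subset_Icc_self
  -- L¹ integrability on Icc
  have iR₁ : IntegrableOn R₁ (Icc (0:ℝ) 1) := int_of_sq R₁ hmR₁ hR₁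
  have iS₁ : IntegrableOn S₁ (Icc (0:ℝ) 1) := int_of_sq S₁ hmS₁ hS₁
  have iR₂ : IntegrableOn R₂ (Icc (0:ℝ) 1) := int_of_sq R₂ hmR₂ hR₂
  have iS₂ : IntegrableOn S₂ (Icc (0:ℝ) 1) := int_of_sq S₂ hmS₂ hS₂
  have hg₁ : IntegrableOn (fun y => (R₁ y - S₁ y) / 2) (Icc (0:ℝ) 1) :=
    (iR₁.sub iS₁).div_const 2
  have hg₂ : IntegrableOn (fun y => (R₂ y - S₂ y) / 2) (Icc (0:ℝ) 1) :=
    (iR₂.sub iS₂).div_const 2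
  -- continuity and measurability of the coefficient functions
  have hinvc : Continuous (Function.invFun F) := invF_cont hκ hc hlb hub hF
  have hacont : ContinuousOn (fun x => c (uCon F R₁ S₁ x)) (Icc (0:ℝ) 1) := by
    have h1 : ContinuousOn (fun x => Dinv (fun y => (R₁ y - S₁ y) / 2) x) (Icc (0:ℝ) 1) := by
      unfold Dinv
      exact ((primitive_contOn hg₁).sub
        ((continuous_id.mul continuous_const).continuousOn)).sub continuousOn_const
    exact (hc.comp hinvc).comp_continuousOn h1
  have hbcont : ContinuousOn (fun x => c (uCon F R₂ S₂ x)) (Icc (0:ℝ) 1) := by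
    have h1 : ContinuousOn (fun x => Dinv (fun y => (R₂ y - S₂ y) / 2) x) (Icc (0:ℝ) 1) := by
      unfold Dinv
      exact ((primitive_contOn hg₂).sub
        ((continuous_id.mul continuous_const).continuousOn)).sub continuousOn_const
    exact (hc.comp hinvc).comp_continuousOn h1
  have ha : AEStronglyMeasurable (fun x => c (uCon F R₁ S₁ x))
      (volume.restrict (Ioc (0:ℝ) 1)) :=
    (hacont.aestronglyMeasurable measurableSet_Icc).mono_measure
      (Measure.restrict_mono Ioc_subset_Icc_self le_rfl)
  have hb : AEStronglyMeasurable (fun x => c (uCon F R₂ S₂ x))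
      (volume.restrict (Ioc (0:ℝ) 1)) :=
    (hbcont.aestronglyMeasurable measurableSet_Icc).mono_measure
      (Measure.restrict_mono Ioc_subset_Icc_self le_rfl)
  have habs : ∀ x, |c (uCon F R₁ S₁ x)| ≤ κ := fun x => by
    rw [abs_of_nonneg (le_trans (inv_nonneg.mpr hκ0.le) (hlb _))]; exact hub _
  have hbabs : ∀ x, |c (uCon F R₂ S₂ x)| ≤ κ := fun x => by
    rw [abs_of_nonneg (le_trans (inv_nonneg.mpr hκ0.le) (hlb _))]; exact hub _
  -- abbreviations for the L² distances
  set DR : ℝ := L2n (fun x => R₁ x - R₂ x) with hDRdef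
  set DS : ℝ := L2n (fun x => S₁ x - S₂ x) with hDSdef
  have hDR0 : 0 ≤ DR := L2n_nonneg _
  have hDS0 : 0 ≤ DS := L2n_nonneg _
  set M : ℝ := 2 * κ ^ 2 * (DR + DS) with hMdef
  have hM0 : 0 ≤ M := by positivity
  -- the L¹ bound on the difference of the antiderivatives
  have hA : (∫ y in Ioc (0:ℝ) 1, |(R₁ y - S₁ y) / 2 - (R₂ y - S₂ y) / 2|)
      ≤ (DR + DS) / 2 := by
    have hdR'' : IntegrableOn (fun y => R₁ y - R₂ y) (Icc (0:ℝ) 1) := iR₁.sub iR₂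
    have hdS'' : IntegrableOn (fun y => S₁ y - S₂ y) (Icc (0:ℝ) 1) := iS₁.sub iS₂
    have hdR : IntegrableOn (fun y => R₁ y - R₂ y) (Ioc (0:ℝ) 1) :=
      hdR''.mono_set Ioc_subset_Icc_self
    have hdS : IntegrableOn (fun y => S₁ y - S₂ y) (Ioc (0:ℝ) 1) :=
      hdS''.mono_set Ioc_subset_Icc_self
    have hrhs : IntegrableOn (fun y => |R₁ y - R₂ y| / 2 + |S₁ y - S₂ y| / 2) (Ioc (0:ℝ) 1) :=
      (hdR.abs.div_const 2).add (hdS.abs.div_const 2)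
    have step1 : (∫ y in Ioc (0:ℝ) 1, |(R₁ y - S₁ y) / 2 - (R₂ y - S₂ y) / 2|)
        ≤ ∫ y in Ioc (0:ℝ) 1, (|R₁ y - R₂ y| / 2 + |S₁ y - S₂ y| / 2) := by
      refine integral_mono_of_nonneg (Filter.Eventually.of_forall fun y => abs_nonneg _)
        hrhs (Filter.Eventually.of_forall fun y => ?_)
      dsimp only
      have e : (R₁ y - S₁ y) / 2 - (R₂ y - S₂ y) / 2
          = ((R₁ y - R₂ y) - (S₁ y - S₂ y)) / 2 := by ring
      rw [e, abs_div, abs_two]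
      have := abs_sub (R₁ y - R₂ y) (S₁ y - S₂ y)
      linarith
    have step2 : (∫ y in Ioc (0:ℝ) 1, (|R₁ y - R₂ y| / 2 + |S₁ y - S₂ y| / 2))
        = (∫ y in Ioc (0:ℝ) 1, |R₁ y - R₂ y|) / 2
          + (∫ y in Ioc (0:ℝ) 1, |S₁ y - S₂ y|) / 2 := by
      rw [integral_add (hdR.abs.div_const 2) (hdS.abs.div_const 2), integral_div, integral_div]
    have step3 : (∫ y in Ioc (0:ℝ) 1, |R₁ y - R₂ y|) ≤ DR :=
      abs_integral_le_L2n _ (sq_diff_int R₁ R₂ hmR₁ hmR₂ hR₁' hR₂')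
    have step4 : (∫ y in Ioc (0:ℝ) 1, |S₁ y - S₂ y|) ≤ DS :=
      abs_integral_le_L2n _ (sq_diff_int S₁ S₂ hmS₁ hmS₂ hS₁' hS₂')
    rw [step2] at step1
    linarith [step1, step3, step4]
  -- the uniform bound on the difference of the coefficients
  have hM : ∀ x ∈ Ioc (0:ℝ) 1, |c (uCon F R₁ S₁ x) - c (uCon F R₂ S₂ x)| ≤ M := by
    intro x hx
    have hx' : x ∈ Icc (0:ℝ) 1 := Ioc_subset_Icc_self hx
    have h1 : |c (uCon F R₁ S₁ x) - c (uCon F R₂ S₂ x)|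
        ≤ κ * |uCon F R₁ S₁ x - uCon F R₂ S₂ x| := hclip _ _
    have h2 : |uCon F R₁ S₁ x - uCon F R₂ S₂ x|
        ≤ κ * |Dinv (fun y => (R₁ y - S₁ y) / 2) x - Dinv (fun y => (R₂ y - S₂ y) / 2) x| :=
      invF_lip hκ hc hlb hub hF _ _
    have h3 : |Dinv (fun y => (R₁ y - S₁ y) / 2) x - Dinv (fun y => (R₂ y - S₂ y) / 2) x|
        ≤ 4 * ∫ y in Ioc (0:ℝ) 1, |(R₁ y - S₁ y) / 2 - (R₂ y - S₂ y) / 2| :=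
      Dinv_diff_bound hg₁ hg₂ hx'
    have h4 := hA
    have c1 : |uCon F R₁ S₁ x - uCon F R₂ S₂ x| ≤ κ * (4 * ((DR + DS) / 2)) := by
      refine le_trans h2 ?_
      have : |Dinv (fun y => (R₁ y - S₁ y) / 2) x - Dinv (fun y => (R₂ y - S₂ y) / 2) x|
          ≤ 4 * ((DR + DS) / 2) := le_trans h3 (by linarith)
      nlinarith [abs_nonneg (Dinv (fun y => (R₁ y - S₁ y) / 2) x
        - Dinv (fun y => (R₂ y - S₂ y) / 2) x)]
    calc |c (uCon F R₁ S₁ x) - c (uCon F R₂ S₂ x)|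
        ≤ κ * |uCon F R₁ S₁ x - uCon F R₂ S₂ x| := h1
      _ ≤ κ * (κ * (4 * ((DR + DS) / 2))) := by
          exact mul_le_mul_of_nonneg_left c1 hκ0.le
      _ = M := by rw [hMdef]; ring
  have hM' : ∀ x ∈ Ioc (0:ℝ) 1, |c (uCon F R₂ S₂ x) - c (uCon F R₁ S₁ x)| ≤ M := by
    intro x hx; rw [abs_sub_comm]; exact hM x hx
  -- key inequality, four versions
  have k1 := key_ineq κ M hκ hM0 (fun x => c (uCon F R₁ S₁ x)) (fun x => c (uCon F R₂ S₂ x))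
    R₁ R₂ ha hb habs hM hmR₁ hmR₂ hR₁' hR₂'
  have k2 := key_ineq κ M hκ hM0 (fun x => c (uCon F R₂ S₂ x)) (fun x => c (uCon F R₁ S₁ x))
    R₂ R₁ hb ha hbabs hM' hmR₂ hmR₁ hR₂' hR₁'
  have k3 := key_ineq κ M hκ hM0 (fun x => c (uCon F R₁ S₁ x)) (fun x => c (uCon F R₂ S₂ x))
    S₁ S₂ ha hb habs hM hmS₁ hmS₂ hS₁' hS₂'
  have k4 := key_ineq κ M hκ hM0 (fun x => c (uCon F R₂ S₂ x)) (fun x => c (uCon F R₁ S₁ x))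
    S₂ S₁ hb ha hbabs hM' hmS₂ hmS₁ hS₂' hS₁'
  -- rewrite the swapped versions
  have e2L : L2n (fun x => c (uCon F R₂ S₂ x) * R₂ x - c (uCon F R₁ S₁ x) * R₁ x)
      = L2n (fun x => c (uCon F R₁ S₁ x) * R₁ x - c (uCon F R₂ S₂ x) * R₂ x) :=
    L2n_sq_congr _ _ fun x => by ring
  have e2R : L2n (fun x => R₂ x - R₁ x) = L2n (fun x => R₁ x - R₂ x) :=
    L2n_sq_congr _ _ fun x => by ring
  have e4L : L2n (fun x => c (uCon F R₂ S₂ x) * S₂ x - c (uCon F R₁ S₁ x) * S₁ x)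
      = L2n (fun x => c (uCon F R₁ S₁ x) * S₁ x - c (uCon F R₂ S₂ x) * S₂ x) :=
    L2n_sq_congr _ _ fun x => by ring
  have e4R : L2n (fun x => S₂ x - S₁ x) = L2n (fun x => S₁ x - S₂ x) :=
    L2n_sq_congr _ _ fun x => by ring
  rw [e2L, e2R] at k2
  rw [e4L, e4R] at k4
  -- bounds with the minimum
  set mR : ℝ := min (L2n R₁) (L2n R₂) with hmRdef
  set mS : ℝ := min (L2n S₁) (L2n S₂) with hmSdef
  have hmR0 : 0 ≤ mR := le_min (L2n_nonneg _) (L2n_nonneg _)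
  have hmS0 : 0 ≤ mS := le_min (L2n_nonneg _) (L2n_nonneg _)
  have kR : L2n (fun x => c (uCon F R₁ S₁ x) * R₁ x - c (uCon F R₂ S₂ x) * R₂ x)
      ≤ Real.sqrt 2 * (κ * DR + M * mR) := by
    rcases le_total (L2n R₁) (L2n R₂) with h | h
    · rw [hmRdef, min_eq_left h]; exact k2
    · rw [hmRdef, min_eq_right h]; exact k1
  have kS : L2n (fun x => c (uCon F R₁ S₁ x) * S₁ x - c (uCon F R₂ S₂ x) * S₂ x)
      ≤ Real.sqrt 2 * (κ * DS + M * mS) := by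
    rcases le_total (L2n S₁) (L2n S₂) with h | h
    · rw [hmSdef, min_eq_left h]; exact k4
    · rw [hmSdef, min_eq_right h]; exact k3
  -- final arithmetic
  have hs2 : Real.sqrt 2 ≤ 2 := by
    nlinarith [Real.sq_sqrt (by norm_num : (0:ℝ) ≤ 2), Real.sqrt_nonneg 2]
  have hs20 : (0:ℝ) ≤ Real.sqrt 2 := Real.sqrt_nonneg 2
  have hκκ : κ ≤ κ ^ 2 := by nlinarith
  have tR : Real.sqrt 2 * (κ * DR + M * mR) ≤ 2 * (κ * DR + M * mR) := by
    have hnn : 0 ≤ κ * DR + M * mR := by positivity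
    nlinarith
  have tS : Real.sqrt 2 * (κ * DS + M * mS) ≤ 2 * (κ * DS + M * mS) := by
    have hnn : 0 ≤ κ * DS + M * mS := by positivity
    nlinarith
  have final : 2 * (κ * DR + M * mR) + 2 * (κ * DS + M * mS)
      ≤ 4 * κ ^ 2 * (1 + mR + mS) * (DR + DS) := by
    rw [hMdef]
    nlinarith [mul_nonneg (sub_nonneg.mpr hκκ) (add_nonneg hDR0 hDS0),
      mul_nonneg hmR0 (add_nonneg hDR0 hDS0), mul_nonneg hmS0 (add_nonneg hDR0 hDS0),
      sq_nonneg κ]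
  calc L2n (fun x => c (uCon F R₁ S₁ x) * R₁ x - c (uCon F R₂ S₂ x) * R₂ x)
      + L2n (fun x => c (uCon F R₁ S₁ x) * S₁ x - c (uCon F R₂ S₂ x) * S₂ x)
      ≤ Real.sqrt 2 * (κ * DR + M * mR) + Real.sqrt 2 * (κ * DS + M * mS) :=
        add_le_add kR kS
    _ ≤ 2 * (κ * DR + M * mR) + 2 * (κ * DS + M * mS) := add_le_add tR tS
    _ ≤ 4 * κ ^ 2 * (1 + mR + mS) * (DR + DS) := final
end

section
/- Let c be C¹ with κ⁻¹ ≤ c ≤ κ, F(u) = ∫₀^u c, and suppose R − S : 𝕋 → ℝ is continuous with zero spatial average. Define u := F⁻¹(∂ₓ⁻¹((R − S)/2)). Then u is C¹ on the torus and satisfies the constitutive relation 2 c(u(x)) ∂ₓ u(x) = R(x) − S(x) for all x ∈ 𝕋, and F∘u has zero average over 𝕋. -/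
open MeasureTheory

/-- with `R − S` continuous, periodic, with zero average, the function
`u := F⁻¹(∂ₓ⁻¹((R − S)/2))` is `C¹` on the torus, satisfies `2 c(u) ∂ₓu = R − S`,
and `F ∘ u` has zero average. -/
theorem constitutive_solution
    (κ : ℝ) (hκ : 1 < κ)
    (c : ℝ → ℝ) (hc : ContDiff ℝ 1 c)
    (hlb : ∀ r, κ⁻¹ ≤ c r) (hub : ∀ r, c r ≤ κ)
    (F : ℝ → ℝ) (hF : ∀ v, F v = ∫ r in (0:ℝ)..v, c r)
    (R S : ℝ → ℝ)
    (hRS : Continuous (fun x => R x - S x))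
    (hper : Function.Periodic (fun x => R x - S x) 1)
    (havg : ∫ x in (0:ℝ)..1, (R x - S x) = 0) :
    ContDiff ℝ 1 (fun x => Function.invFun F (Dinv (fun y => (R y - S y) / 2) x)) ∧
    Function.Periodic (fun x => Function.invFun F (Dinv (fun y => (R y - S y) / 2) x)) 1 ∧
    (∀ x, 2 * c (Function.invFun F (Dinv (fun y => (R y - S y) / 2) x))
        * deriv (fun z => Function.invFun F (Dinv (fun y => (R y - S y) / 2) z)) x
      = R x - S x) ∧
    (∫ x in (0:ℝ)..1,
        F (Function.invFun F (Dinv (fun y => (R y - S y) / 2) x))) = 0 := by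
  set g : ℝ → ℝ := fun y => (R y - S y) / 2 with hgdef
  have hgc : Continuous g := hRS.div_const 2
  have hgper : Function.Periodic g 1 := fun x => by
    have h : R (x + 1) - S (x + 1) = R x - S x := hper x
    simp only [hgdef]; rw [h]
  have hgint : ∀ a b : ℝ, IntervalIntegrable g volume a b :=
    fun a b => hgc.intervalIntegrable a b
  have hI : (∫ y in (0:ℝ)..1, g y) = 0 := by
    simp only [hgdef, intervalIntegral.integral_div, havg, zero_div]
  -- the primitive
  set G : ℝ → ℝ := fun x => ∫ y in (0:ℝ)..x, g y with hGdef
  have hGderiv : ∀ x : ℝ, HasDerivAt G (g x) x := fun x =>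
    intervalIntegral.integral_hasDerivAt_right (hgint 0 x)
      (hgc.stronglyMeasurableAtFilter _ _) hgc.continuousAt
  have hGcont : Continuous G := by
    have : Differentiable ℝ G := fun x => (hGderiv x).differentiableAt
    exact this.continuous
  -- Dinv g in terms of G
  have hDeq : ∀ x : ℝ, Dinv g x = G x - ∫ y in (0:ℝ)..1, G y := by
    intro x
    simp only [Dinv, hI, mul_zero, sub_zero, hGdef]
  have hDderiv : ∀ x : ℝ, HasDerivAt (Dinv g) (g x) x := by
    intro x
    have : Dinv g = fun x => G x - ∫ y in (0:ℝ)..1, G y := funext hDeq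
    rw [this]
    exact (hGderiv x).sub_const _
  have hDcont : Continuous (Dinv g) := by
    have : Differentiable ℝ (Dinv g) := fun x => (hDderiv x).differentiableAt
    exact this.continuous
  have hDper : ∀ x : ℝ, Dinv g (x + 1) = Dinv g x := by
    intro x
    rw [hDeq, hDeq]
    have h1 : G (x + 1) = G x + ∫ y in x..(x + 1), g y := by
      simp only [hGdef]
      rw [intervalIntegral.integral_add_adjacent_intervals (hgint 0 x) (hgint x (x + 1))]
    have h2 : (∫ y in x..(x + 1), g y) = ∫ y in (0:ℝ)..(0 + 1), g y :=
      hgper.intervalIntegral_add_eq x 0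
    rw [h1, h2]
    simp [hI]
  have hDavg : (∫ x in (0:ℝ)..1, Dinv g x) = 0 := by
    have h1 : (∫ x in (0:ℝ)..1, Dinv g x)
        = (∫ x in (0:ℝ)..1, G x) - ∫ x in (0:ℝ)..1, (∫ y in (0:ℝ)..1, G y) := by
      rw [← intervalIntegral.integral_sub (hGcont.intervalIntegrable 0 1)
        intervalIntegrable_const]
      exact intervalIntegral.integral_congr fun x _ => hDeq x
    rw [h1, intervalIntegral.integral_const]
    simp
  -- properties of F
  have hcc : Continuous c := hc.continuous
  have hκpos : (0:ℝ) < κ⁻¹ := inv_pos.mpr (lt_trans one_pos hκ)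
  have hcpos : ∀ r, 0 < c r := fun r => lt_of_lt_of_le hκpos (hlb r)
  have hFderiv : ∀ v : ℝ, HasDerivAt F (c v) v := by
    intro v
    have : F = fun v => ∫ r in (0:ℝ)..v, c r := funext hF
    rw [this]
    exact intervalIntegral.integral_hasDerivAt_right (hcc.intervalIntegrable 0 v)
      (hcc.stronglyMeasurableAtFilter _ _) hcc.continuousAt
  have hFc1 : ContDiff ℝ 1 F := by
    rw [contDiff_one_iff_deriv]
    refine ⟨fun v => (hFderiv v).differentiableAt, ?_⟩
    have : deriv F = c := funext fun v => (hFderiv v).deriv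
    rw [this]; exact hcc
  have hFmono : StrictMono F := by
    apply strictMono_of_deriv_pos
    intro v; rw [(hFderiv v).deriv]; exact hcpos v
  have hFinj : Function.Injective F := hFmono.injective
  have hlow : ∀ v : ℝ, 0 ≤ v → κ⁻¹ * v ≤ F v := by
    intro v hv
    have : (∫ r in (0:ℝ)..v, (fun _ => κ⁻¹) r) ≤ ∫ r in (0:ℝ)..v, c r :=
      intervalIntegral.integral_mono_on hv intervalIntegrable_const
        (hcc.intervalIntegrable 0 v) (fun x _ => hlb x)
    rw [hF v]
    calc κ⁻¹ * v = (v - 0) • κ⁻¹ := by ring_nf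
    _ = ∫ r in (0:ℝ)..v, (fun _ => κ⁻¹) r := by rw [intervalIntegral.integral_const]
    _ ≤ _ := this
  have hhigh : ∀ v : ℝ, v ≤ 0 → F v ≤ κ⁻¹ * v := by
    intro v hv
    have h1 : (∫ r in v..(0:ℝ), (fun _ => κ⁻¹) r) ≤ ∫ r in v..(0:ℝ), c r :=
      intervalIntegral.integral_mono_on hv intervalIntegrable_const
        (hcc.intervalIntegrable v 0) (fun x _ => hlb x)
    have h2 : F v = -(∫ r in v..(0:ℝ), c r) := by
      rw [hF v, intervalIntegral.integral_symm]
    rw [h2]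
    have h3 : (∫ r in v..(0:ℝ), (fun _ => κ⁻¹) r) = -(κ⁻¹ * v) := by
      rw [intervalIntegral.integral_const]; rw [smul_eq_mul]; ring
    linarith
  have hFtop : Filter.Tendsto F Filter.atTop Filter.atTop := by
    apply Filter.tendsto_atTop_mono' _ _ (Filter.Tendsto.const_mul_atTop hκpos Filter.tendsto_id)
    filter_upwards [Filter.eventually_ge_atTop (0:ℝ)] with v hv
    exact hlow v hv
  have hFbot : Filter.Tendsto F Filter.atBot Filter.atBot := by
    apply Filter.tendsto_atBot_mono' _ _ (Filter.Tendsto.const_mul_atBot hκpos Filter.tendsto_id)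
    filter_upwards [Filter.eventually_le_atBot (0:ℝ)] with v hv
    exact hhigh v hv
  have hFsurj : Function.Surjective F := hFc1.continuous.surjective hFtop hFbot
  have hright : ∀ y, F (Function.invFun F y) = y :=
    Function.rightInverse_invFun hFsurj
  -- continuity of the inverse
  have hinvcont : Continuous (Function.invFun F) := by
    let e : ℝ ≃o ℝ := hFmono.orderIsoOfSurjective F hFsurj
    have he : ∀ y, Function.invFun F y = e.symm y := by
      intro y
      apply hFinj
      rw [hright y]
      have : F (e.symm y) = e (e.symm y) := rfl
      rw [this, e.apply_symm_apply]
    have : Function.invFun F = ⇑e.symm := funext he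
    rw [this]
    exact e.symm.continuous
  have hinvderiv : ∀ y : ℝ, HasDerivAt (Function.invFun F) (c (Function.invFun F y))⁻¹ y := by
    intro y
    exact HasDerivAt.of_local_left_inverse hinvcont.continuousAt
      (hFderiv (Function.invFun F y)) (ne_of_gt (hcpos _))
      (Filter.Eventually.of_forall hright)
  -- the solution u
  set u : ℝ → ℝ := fun x => Function.invFun F (Dinv g x) with hudef
  have hucont : Continuous u := hinvcont.comp hDcont
  have huderiv : ∀ x : ℝ, HasDerivAt u ((c (u x))⁻¹ * g x) x := by
    intro x
    have := (hinvderiv (Dinv g x)).comp x (hDderiv x)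
    exact this
  have huC1 : ContDiff ℝ 1 u := by
    rw [contDiff_one_iff_deriv]
    refine ⟨fun x => (huderiv x).differentiableAt, ?_⟩
    have : deriv u = fun x => (c (u x))⁻¹ * g x := funext fun x => (huderiv x).deriv
    rw [this]
    exact (((hcc.comp hucont).inv₀ (fun x => ne_of_gt (hcpos _))).mul hgc)
  refine ⟨huC1, ?_, ?_, ?_⟩
  · intro x
    show Function.invFun F (Dinv g (x + 1)) = Function.invFun F (Dinv g x)
    rw [hDper x]
  · intro x
    have hd : deriv u x = (c (u x))⁻¹ * g x := (huderiv x).deriv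
    show 2 * c (u x) * deriv u x = R x - S x
    rw [hd]
    have hne : c (u x) ≠ 0 := ne_of_gt (hcpos _)
    field_simp [hgdef]
    ring
  · have : (∫ x in (0:ℝ)..1, F (u x)) = ∫ x in (0:ℝ)..1, Dinv g x :=
      intervalIntegral.integral_congr fun x _ => hright (Dinv g x)
    rw [this, hDavg]
end

section
/- Let c : ℝ → [κ⁻¹, κ] be C¹ with |c'| ≤ κ, c̃ = c'/(4c), and let u : 𝕋 → ℝ be C¹ satisfying 2c(u)∂ₓu = R − S with R, S ∈ C¹(𝕋). Then ½∫_𝕋 c(u) ∂ₓ(R² − S²) dx + ∫_𝕋 c̃(u)(R−S)(R²−S²) dx = 0. -/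
open MeasureTheory

/-- the cancellation `I₁ + I₂ = 0` in the energy estimate:
`½∫ c(u) ∂ₓ(R² − S²) dx + ∫ c̃(u)(R−S)(R²−S²) dx = 0` where `c̃ = c'/(4c)`
and `2c(u)∂ₓu = R − S`. -/
theorem energy_cancellation
    (κ : ℝ) (hκ : 1 < κ)
    (c : ℝ → ℝ) (hc : ContDiff ℝ 1 c)
    (hlb : ∀ r, κ⁻¹ ≤ c r) (hub : ∀ r, c r ≤ κ) (hder : ∀ r, |deriv c r| ≤ κ)
    (u R S : ℝ → ℝ)
    (hu : ContDiff ℝ 1 u) (huper : Function.Periodic u 1)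
    (hR : ContDiff ℝ 1 R) (hRper : Function.Periodic R 1)
    (hS : ContDiff ℝ 1 S) (hSper : Function.Periodic S 1)
    (hcon : ∀ x, 2 * c (u x) * deriv u x = R x - S x) :
    (1/2) * (∫ x in (0:ℝ)..1, c (u x) * deriv (fun y => R y ^ 2 - S y ^ 2) x)
      + (∫ x in (0:ℝ)..1,
          (deriv c (u x) / (4 * c (u x))) * (R x - S x) * (R x ^ 2 - S x ^ 2)) = 0 := by
  have hcpos : ∀ r, 0 < c r := fun r =>
    lt_of_lt_of_le (inv_pos.mpr (lt_trans zero_lt_one hκ)) (hlb r)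
  set g : ℝ → ℝ := fun y => R y ^ 2 - S y ^ 2 with hgdef
  have hg : ContDiff ℝ 1 g := (hR.pow 2).sub (hS.pow 2)
  have hcu : ContDiff ℝ 1 (fun x => c (u x)) := hc.comp hu
  set F : ℝ → ℝ := fun x => c (u x) * g x with hFdef
  have hF : ContDiff ℝ 1 F := hcu.mul hg
  have hderivF : ∀ x, deriv F x
      = deriv (fun x => c (u x)) x * g x + c (u x) * deriv g x := fun x =>
    deriv_mul (hcu.differentiable one_ne_zero x) (hg.differentiable one_ne_zero x)
  have hchain : ∀ x, deriv (fun x => c (u x)) x = deriv c (u x) * deriv u x := fun x =>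
    deriv_comp x (hc.differentiable one_ne_zero (u x)) (hu.differentiable one_ne_zero x)
  -- pointwise identity
  have hpoint : ∀ x, (1/2) * (c (u x) * deriv g x)
      + (deriv c (u x) / (4 * c (u x))) * (R x - S x) * g x
      = (1/2) * deriv F x := by
    intro x
    rw [hderivF x, hchain x, ← hcon x]
    have hne : c (u x) ≠ 0 := (hcpos (u x)).ne'
    field_simp
    ring
  -- continuity / integrability
  have hcont1 : Continuous fun x => c (u x) * deriv g x :=
    (hcu.continuous).mul (hg.continuous_deriv le_rfl)
  have hcont2 : Continuous fun x =>
      (deriv c (u x) / (4 * c (u x))) * (R x - S x) * g x := by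
    have h1 : Continuous fun x => deriv c (u x) :=
      (hc.continuous_deriv le_rfl).comp hu.continuous
    have h2 : Continuous fun x => (4 : ℝ) * c (u x) := continuous_const.mul hcu.continuous
    exact ((h1.div h2 fun x => (by nlinarith [hcpos (u x)] : (0:ℝ) < 4 * c (u x)).ne').mul
      (hR.continuous.sub hS.continuous)).mul hg.continuous
  have hi1 : IntervalIntegrable (fun x => c (u x) * deriv g x) volume 0 1 :=
    hcont1.intervalIntegrable 0 1
  have hi2 : IntervalIntegrable (fun x =>
      (deriv c (u x) / (4 * c (u x))) * (R x - S x) * g x) volume 0 1 :=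
    hcont2.intervalIntegrable 0 1
  have hcombine : (1/2) * (∫ x in (0:ℝ)..1, c (u x) * deriv g x)
      + (∫ x in (0:ℝ)..1, (deriv c (u x) / (4 * c (u x))) * (R x - S x) * g x)
      = ∫ x in (0:ℝ)..1, (1/2) * deriv F x := by
    rw [← intervalIntegral.integral_const_mul, ← intervalIntegral.integral_add
      (hi1.const_mul _) hi2]
    exact intervalIntegral.integral_congr fun x _ => hpoint x
  have hFper : Function.Periodic F 1 := fun x => by
    simp only [hFdef, hgdef, huper x, hRper x, hSper x]
  have hintF : ∫ x in (0:ℝ)..1, deriv F x = F 1 - F 0 :=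
    intervalIntegral.integral_deriv_eq_sub
      (fun x _ => hF.differentiable one_ne_zero x)
      ((hF.continuous_deriv le_rfl).intervalIntegrable 0 1)
  have hF10 : F 1 = F 0 := by simpa using hFper 0
  calc (1/2) * (∫ x in (0:ℝ)..1, c (u x) * deriv g x)
      + (∫ x in (0:ℝ)..1, (deriv c (u x) / (4 * c (u x))) * (R x - S x) * g x)
      = ∫ x in (0:ℝ)..1, (1/2) * deriv F x := hcombine
    _ = (1/2) * ∫ x in (0:ℝ)..1, deriv F x := intervalIntegral.integral_const_mul _ _
    _ = 0 := by rw [hintF, hF10]; ring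
end
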